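/- arXiv:2208.08744 — 3 statements merged into one kernel-verified Lean document; each statement's English description precedes it below -/
import Mathlib

section
/- Let A ∈ R^{d×d}, B ∈ R^{d×k}, and let Q ∈ R^{d×d}, R ∈ R^{k×k} be symmetric positive definite. Let K, K' ∈ R^{k×d} both stabilize (A,B) (i.e., ρ(A−BK) < 1 and ρ(A−BK') < 1), and let P_K, P_{K'} be the unique positive definite solutions of P = Q + KᵀRK + (A−BK)ᵀP(A−BK) (resp. with K'). Define E_K = (R + BᵀP_K B)K − BᵀP_K A. Then for every x ∈ R^d, xᵀ(P_{K'} − P_K)x = ∑_{t≥0} [ 2 x_tᵀ (K'−K)ᵀ E_K x_t + x_tᵀ (K'−K)ᵀ (R + BᵀP_K B)(K'−K) x_t ], where x_t = (A−BK')ᵗ x. -/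
open Matrix Filter

section Aux
attribute [local instance] Matrix.linftyOpNormedRing Matrix.linftyOpNormedAlgebra

theorem aux_geom (d : ℕ) (hd : 0 < d) (L : Matrix (Fin d) (Fin d) ℝ)
    (h : ∀ μ ∈ spectrum ℂ (L.map Complex.ofReal), ‖μ‖ < 1) :
    ∃ c : ℝ, 0 ≤ c ∧ c < 1 ∧ ∀ᶠ t in atTop, ∀ i j, |(L ^ t) i j| ≤ c ^ t := by
  haveI : Nonempty (Fin d) := ⟨⟨0, hd⟩⟩
  haveI : CompleteSpace (Matrix (Fin d) (Fin d) ℂ) := FiniteDimensional.complete ℝ _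
  set a : Matrix (Fin d) (Fin d) ℂ := L.map Complex.ofReal with ha
  have hρ : spectralRadius ℂ a < 1 := by
    have := spectrum.spectralRadius_lt_of_forall_lt a (r := 1)
      (fun z hz => by simpa [← NNReal.coe_lt_coe, coe_nnnorm] using h z hz)
    simpa using this
  obtain ⟨c, hc1, hc2⟩ := exists_between hρ
  lift c to NNReal using (hc2.trans ENNReal.one_lt_top).ne
  refine ⟨c, c.coe_nonneg, by exact_mod_cast hc2, ?_⟩
  have hT := spectrum.pow_nnnorm_pow_one_div_tendsto_nhds_spectralRadius a
  have hev : ∀ᶠ t : ℕ in atTop, (‖a ^ t‖₊ : ENNReal) ^ (1 / (t:ℝ)) < c :=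
    hT.eventually_lt_const hc1
  have entry : ∀ (M : Matrix (Fin d) (Fin d) ℂ) (i j : Fin d), ‖M i j‖ ≤ ‖M‖ := by
    intro M i j
    have h1 : ‖M i j‖₊ ≤ ‖M‖₊ := by
      rw [Matrix.linfty_opNNNorm_def]
      refine le_trans (Finset.single_le_sum (f := fun j => ‖M i j‖₊)
        (fun _ _ => zero_le) (Finset.mem_univ j)) ?_
      exact Finset.le_sup (f := fun i => ∑ j, ‖M i j‖₊) (Finset.mem_univ i)
    exact_mod_cast h1
  have hmap : ∀ t : ℕ, a ^ t = (L ^ t).map Complex.ofReal := by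
    intro t
    have : (Complex.ofRealHom.mapMatrix (L ^ t) : Matrix (Fin d) (Fin d) ℂ)
        = Complex.ofRealHom.mapMatrix L ^ t := map_pow _ _ _
    exact this.symm
  filter_upwards [hev, eventually_ge_atTop 1] with t ht ht1
  intro i j
  have htn : (t : ℝ) ≠ 0 := by positivity
  have h2 : (((‖a ^ t‖₊ : ENNReal) ^ (1 / (t:ℝ))) ^ (t:ℝ)) ≤ (c : ENNReal) ^ (t:ℝ) :=
    ENNReal.rpow_le_rpow ht.le (by positivity)
  rw [← ENNReal.rpow_mul, one_div, inv_mul_cancel₀ htn, ENNReal.rpow_one] at h2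
  rw [ENNReal.rpow_natCast] at h2
  have h3 : ‖a ^ t‖₊ ≤ c ^ t := by
    rw [← ENNReal.coe_pow] at h2; exact_mod_cast h2
  have h4 : ‖a ^ t‖ ≤ (c:ℝ) ^ t := by
    calc ‖a ^ t‖ = (‖a ^ t‖₊ : ℝ) := rfl
      _ ≤ ((c ^ t : NNReal) : ℝ) := by exact_mod_cast h3
      _ = (c:ℝ) ^ t := by push_cast; ring
  calc |(L ^ t) i j| = ‖(a ^ t) i j‖ := by
        rw [hmap t, Matrix.map_apply, Complex.norm_real, Real.norm_eq_abs]
    _ ≤ ‖a ^ t‖ := entry _ i j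
    _ ≤ (c:ℝ) ^ t := h4
end Aux

theorem aux_dot_bound {d : ℕ} (N : Matrix (Fin d) (Fin d) ℝ) (v : Fin d → ℝ) (b : ℝ)
    (hb : 0 ≤ b) (hv : ∀ i, |v i| ≤ b) :
    |v ⬝ᵥ N.mulVec v| ≤ (∑ i, ∑ j, |N i j|) * b ^ 2 := by
  have h1 : v ⬝ᵥ N.mulVec v = ∑ i, ∑ j, v i * N i j * v j := by
    simp [dotProduct, Matrix.mulVec, Finset.mul_sum, mul_assoc, mul_left_comm]
  rw [h1, Finset.sum_mul]
  refine le_trans (Finset.abs_sum_le_sum_abs _ _) (Finset.sum_le_sum fun i _ => ?_)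
  rw [Finset.sum_mul]
  refine le_trans (Finset.abs_sum_le_sum_abs _ _) (Finset.sum_le_sum fun j _ => ?_)
  rw [abs_mul, abs_mul, sq]
  calc |v i| * |N i j| * |v j| ≤ b * |N i j| * b := by
        gcongr; exacts [hv i, hv j]
    _ = |N i j| * (b * b) := by ring


/-- LQR almost-smoothness identity: for stabilizing `K, K'` with value matrices
`P_K, P_{K'}` solving the policy Lyapunov equations, and
`E_K = (R + BᵀP_K B)K − BᵀP_K A`, for every `x` the series
`∑_t [2 x_tᵀ(K'−K)ᵀE_K x_t + x_tᵀ(K'−K)ᵀ(R+BᵀP_K B)(K'−K)x_t]`, with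
`x_t = (A−BK')ᵗ x`, converges to `xᵀ(P_{K'} − P_K)x`. -/
theorem stmt_9 (d k : ℕ) (A : Matrix (Fin d) (Fin d) ℝ) (B : Matrix (Fin d) (Fin k) ℝ)
    (Q : Matrix (Fin d) (Fin d) ℝ) (R : Matrix (Fin k) (Fin k) ℝ)
    (hQ : Q.PosDef) (hR : R.PosDef)
    (K K' : Matrix (Fin k) (Fin d) ℝ)
    (hK : ∀ μ ∈ spectrum ℂ ((A - B * K).map Complex.ofReal), ‖μ‖ < 1)
    (hK' : ∀ μ ∈ spectrum ℂ ((A - B * K').map Complex.ofReal), ‖μ‖ < 1)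
    (P P' : Matrix (Fin d) (Fin d) ℝ) (hP : P.PosDef) (hP' : P'.PosDef)
    (hPeq : P = Q + Kᵀ * R * K + (A - B * K)ᵀ * P * (A - B * K))
    (hP'eq : P' = Q + K'ᵀ * R * K' + (A - B * K')ᵀ * P' * (A - B * K'))
    (E : Matrix (Fin k) (Fin d) ℝ) (hE : E = (R + Bᵀ * P * B) * K - Bᵀ * P * A)
    (x : Fin d → ℝ) :
    HasSum
      (fun t : ℕ =>
        2 * (((A - B * K') ^ t).mulVec x ⬝ᵥ ((K' - K)ᵀ * E).mulVec
              (((A - B * K') ^ t).mulVec x)) +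
        ((A - B * K') ^ t).mulVec x ⬝ᵥ
          ((K' - K)ᵀ * (R + Bᵀ * P * B) * (K' - K)).mulVec
            (((A - B * K') ^ t).mulVec x))
      (x ⬝ᵥ (P' - P).mulVec x) := by
  rcases Nat.eq_zero_or_pos d with hd | hd
  · subst hd
    have h0 : ∀ (v w : Fin 0 → ℝ), v ⬝ᵥ w = 0 := fun v w => by simp [dotProduct]
    simp only [h0, mul_zero, add_zero]
    exact hasSum_zero
  -- notation
  set L : Matrix (Fin d) (Fin d) ℝ := A - B * K' with hL
  set C : Matrix (Fin k) (Fin d) ℝ := K' - K with hC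
  set M' : Matrix (Fin d) (Fin d) ℝ := Cᵀ * E + Eᵀ * C + Cᵀ * (R + Bᵀ * P * B) * C with hM'
  set D : Matrix (Fin d) (Fin d) ℝ := P' - P with hD
  -- transpose facts
  have hPt : Pᵀ = P := by
    have := hP.1.eq
    rwa [conjTranspose_eq_transpose_of_trivial] at this
  have hRt : Rᵀ = R := by
    have := hR.1.eq
    rwa [conjTranspose_eq_transpose_of_trivial] at this
  -- the key Lyapunov difference identity
  have key : D - Lᵀ * D * L = M' := by
    have e1 : P' - Lᵀ * P' * L = Q + K'ᵀ * R * K' := by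
      nth_rewrite 1 [hP'eq]; abel
    have e2 : P - (A - B * K)ᵀ * P * (A - B * K) = Q + Kᵀ * R * K := by
      nth_rewrite 1 [hPeq]; abel
    calc D - Lᵀ * D * L
        = (P' - Lᵀ * P' * L) - (P - (A - B * K)ᵀ * P * (A - B * K))
          + (Lᵀ * P * L - (A - B * K)ᵀ * P * (A - B * K)) := by
          rw [hD]; noncomm_ring
      _ = (Q + K'ᵀ * R * K') - (Q + Kᵀ * R * K)
          + (Lᵀ * P * L - (A - B * K)ᵀ * P * (A - B * K)) := by rw [e1, e2]
      _ = M' := by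
          rw [hM', hC, hE, hL]
          simp only [transpose_sub, transpose_mul, transpose_add, transpose_transpose, hPt, hRt]
          simp only [sub_eq_add_neg, Matrix.mul_add, Matrix.add_mul, Matrix.neg_mul,
            Matrix.mul_neg, neg_neg, neg_add_rev, Matrix.mul_assoc]
          abel
  -- quadratic form rewriting
  have hsym : ∀ (N : Matrix (Fin d) (Fin d) ℝ) (w : Fin d → ℝ),
      w ⬝ᵥ Nᵀ.mulVec w = w ⬝ᵥ N.mulVec w := by
    intro N w
    rw [Matrix.dotProduct_mulVec, Matrix.vecMul_transpose, dotProduct_comm]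
  have hfM : ∀ w : Fin d → ℝ,
      2 * (w ⬝ᵥ (Cᵀ * E).mulVec w) + w ⬝ᵥ (Cᵀ * (R + Bᵀ * P * B) * C).mulVec w
        = w ⬝ᵥ M'.mulVec w := by
    intro w
    have h1 : w ⬝ᵥ (Eᵀ * C).mulVec w = w ⬝ᵥ (Cᵀ * E).mulVec w := by
      have := hsym (Cᵀ * E) w
      rwa [transpose_mul, transpose_transpose] at this
    rw [hM']
    simp only [Matrix.add_mulVec, dotProduct_add, h1]
    ring
  -- telescoping identity
  have hstep : ∀ t : ℕ, (L ^ (t + 1)).mulVec x = L.mulVec ((L ^ t).mulVec x) := by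
    intro t
    rw [pow_succ', Matrix.mulVec_mulVec]
  have htel : ∀ t : ℕ,
      ((L ^ t).mulVec x) ⬝ᵥ M'.mulVec ((L ^ t).mulVec x)
        = (((L ^ t).mulVec x) ⬝ᵥ D.mulVec ((L ^ t).mulVec x))
          - (((L ^ (t + 1)).mulVec x) ⬝ᵥ D.mulVec ((L ^ (t + 1)).mulVec x)) := by
    intro t
    set w : Fin d → ℝ := (L ^ t).mulVec x
    rw [hstep t, ← key]
    have h2 : (L.mulVec w) ⬝ᵥ D.mulVec (L.mulVec w) = w ⬝ᵥ (Lᵀ * D * L).mulVec w := by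
      rw [mul_assoc, ← Matrix.mulVec_mulVec w Lᵀ (D * L),
        Matrix.dotProduct_mulVec w Lᵀ, Matrix.vecMul_transpose,
        ← Matrix.mulVec_mulVec w D L]
    rw [h2, Matrix.sub_mulVec, dotProduct_sub]
  -- geometric bounds
  obtain ⟨c, hc0, hc1, hcev⟩ := aux_geom d hd L hK'
  set Sx : ℝ := ∑ j, |x j| with hSx
  have hSx0 : 0 ≤ Sx := Finset.sum_nonneg fun _ _ => abs_nonneg _
  have hvb : ∀ᶠ t in Filter.atTop, ∀ i, |((L ^ t).mulVec x) i| ≤ Sx * c ^ t := by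
    filter_upwards [hcev] with t ht i
    calc |((L ^ t).mulVec x) i| = |∑ j, (L ^ t) i j * x j| := by rw [Matrix.mulVec, dotProduct]
      _ ≤ ∑ j, |(L ^ t) i j * x j| := Finset.abs_sum_le_sum_abs _ _
      _ ≤ ∑ j, c ^ t * |x j| := by
          refine Finset.sum_le_sum fun j _ => ?_
          rw [abs_mul]
          exact mul_le_mul_of_nonneg_right (ht i j) (abs_nonneg _)
      _ = Sx * c ^ t := by rw [← Finset.mul_sum, ← hSx]; ring
  have hqb : ∀ (N : Matrix (Fin d) (Fin d) ℝ), ∀ᶠ t in Filter.atTop,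
      |((L ^ t).mulVec x) ⬝ᵥ N.mulVec ((L ^ t).mulVec x)|
        ≤ ((∑ i, ∑ j, |N i j|) * Sx ^ 2) * (c ^ 2) ^ t := by
    intro N
    filter_upwards [hvb] with t ht
    have := aux_dot_bound N ((L ^ t).mulVec x) (Sx * c ^ t) (by positivity) ht
    calc |((L ^ t).mulVec x) ⬝ᵥ N.mulVec ((L ^ t).mulVec x)|
        ≤ (∑ i, ∑ j, |N i j|) * (Sx * c ^ t) ^ 2 := this
      _ = ((∑ i, ∑ j, |N i j|) * Sx ^ 2) * (c ^ 2) ^ t := by ring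
  have hc2 : c ^ 2 < 1 := by nlinarith
  have hgeo : ∀ (b : ℝ), Summable (fun t : ℕ => b * (c ^ 2) ^ t) := fun b =>
    (summable_geometric_of_lt_one (by positivity) hc2).mul_left b
  -- summability of the series
  have hsummable : Summable (fun t : ℕ =>
      ((L ^ t).mulVec x) ⬝ᵥ M'.mulVec ((L ^ t).mulVec x)) := by
    refine Summable.of_norm_bounded_eventually_nat (hgeo ((∑ i, ∑ j, |M' i j|) * Sx ^ 2)) ?_
    filter_upwards [hqb M'] with t ht
    simpa [Real.norm_eq_abs] using ht
  -- limit of the tail quadratic form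
  have hgt : Filter.Tendsto (fun t : ℕ =>
      ((L ^ t).mulVec x) ⬝ᵥ D.mulVec ((L ^ t).mulVec x)) Filter.atTop (nhds 0) := by
    have hb : Filter.Tendsto (fun t : ℕ => ((∑ i, ∑ j, |D i j|) * Sx ^ 2) * (c ^ 2) ^ t)
        Filter.atTop (nhds 0) := by
      have := tendsto_pow_atTop_nhds_zero_of_lt_one (by positivity) hc2
      simpa using this.const_mul ((∑ i, ∑ j, |D i j|) * Sx ^ 2)
    refine tendsto_of_tendsto_of_tendsto_of_le_of_le' (by simpa using hb.neg) hb ?_ ?_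
    · filter_upwards [hqb D] with t ht
      linarith [neg_abs_le (((L ^ t).mulVec x) ⬝ᵥ D.mulVec ((L ^ t).mulVec x)), ht]
    · filter_upwards [hqb D] with t ht
      linarith [le_abs_self (((L ^ t).mulVec x) ⬝ᵥ D.mulVec ((L ^ t).mulVec x))]
  -- identify the sum
  have hfun : (fun t : ℕ =>
        2 * (((A - B * K') ^ t).mulVec x ⬝ᵥ ((K' - K)ᵀ * E).mulVec
              (((A - B * K') ^ t).mulVec x)) +
        ((A - B * K') ^ t).mulVec x ⬝ᵥ
          ((K' - K)ᵀ * (R + Bᵀ * P * B) * (K' - K)).mulVec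
            (((A - B * K') ^ t).mulVec x))
      = fun t : ℕ => ((L ^ t).mulVec x) ⬝ᵥ M'.mulVec ((L ^ t).mulVec x) :=
    funext fun t => hfM ((L ^ t).mulVec x)
  rw [hfun]
  have hhs := hsummable.hasSum
  have h1 := hhs.tendsto_sum_nat
  have h2 : ∀ n : ℕ, ∑ t ∈ Finset.range n,
      ((L ^ t).mulVec x) ⬝ᵥ M'.mulVec ((L ^ t).mulVec x)
        = (x ⬝ᵥ D.mulVec x) - ((L ^ n).mulVec x) ⬝ᵥ D.mulVec ((L ^ n).mulVec x) := by
    intro n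
    have := Finset.sum_range_sub' (f := fun t : ℕ =>
      ((L ^ t).mulVec x) ⬝ᵥ D.mulVec ((L ^ t).mulVec x)) n
    rw [Finset.sum_congr rfl fun t _ => htel t, this]
    simp
  rw [funext h2] at h1
  have h3 : Filter.Tendsto (fun n : ℕ =>
      (x ⬝ᵥ D.mulVec x) - ((L ^ n).mulVec x) ⬝ᵥ D.mulVec ((L ^ n).mulVec x))
      Filter.atTop (nhds (x ⬝ᵥ D.mulVec x)) := by
    simpa using (tendsto_const_nhds (x := x ⬝ᵥ D.mulVec x) (f := Filter.atTop)).sub hgt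
  have : (∑' t : ℕ, ((L ^ t).mulVec x) ⬝ᵥ M'.mulVec ((L ^ t).mulVec x))
      = x ⬝ᵥ D.mulVec x := tendsto_nhds_unique h1 h3
  rwa [this] at hhs
end

section
/- With the notation of LQR (A, B, Q, R, stabilizing K, value matrix P_K, E_K = (R+BᵀP_K B)K − BᵀP_K A) and for any x ∈ R^d and K' ∈ R^{k×d}, the quantity A_{K,K'}(x) := 2 xᵀ(K'−K)ᵀE_K x + xᵀ(K'−K)ᵀ(R + BᵀP_K B)(K'−K)x satisfies A_{K,K'}(x) ≥ − xᵀ E_Kᵀ (R + BᵀP_K B)^{-1} E_K x, with equality when K' = K − (R + BᵀP_K B)^{-1} E_K. -/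
open Matrix

lemma aux_complete_square {k : ℕ} (M : Matrix (Fin k) (Fin k) ℝ) (hM : M.PosDef)
    (v w : Fin k → ℝ) :
    2 * (v ⬝ᵥ w) + v ⬝ᵥ M.mulVec v ≥ -(w ⬝ᵥ M⁻¹.mulVec w) ∧
      (v = -(M⁻¹.mulVec w) →
        2 * (v ⬝ᵥ w) + v ⬝ᵥ M.mulVec v = -(w ⬝ᵥ M⁻¹.mulVec w)) := by
  have hMsymm : Mᵀ = M := hM.isHermitian
  have hdet : IsUnit M.det := (Matrix.isUnit_iff_isUnit_det M).mp hM.isUnit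
  have hMMinv : M * M⁻¹ = 1 := Matrix.mul_nonsing_inv M hdet
  have key : ∀ u : Fin k → ℝ,
      (v + M⁻¹.mulVec w) ⬝ᵥ M.mulVec (v + M⁻¹.mulVec w)
        = 2 * (v ⬝ᵥ w) + v ⬝ᵥ M.mulVec v + w ⬝ᵥ M⁻¹.mulVec w := by
    intro u
    have h1 : M.mulVec (M⁻¹.mulVec w) = w := by
      rw [Matrix.mulVec_mulVec, hMMinv, Matrix.one_mulVec]
    have h2 : (M⁻¹.mulVec w) ⬝ᵥ M.mulVec v = w ⬝ᵥ v := by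
      rw [Matrix.dotProduct_mulVec (M⁻¹.mulVec w) M v, ← Matrix.mulVec_transpose,
        hMsymm, h1]
    rw [Matrix.mulVec_add, h1, dotProduct_add, add_dotProduct,
      add_dotProduct, h2, dotProduct_comm (M⁻¹.mulVec w) w,
      dotProduct_comm w v]
    ring
  have hnn : 0 ≤ (v + M⁻¹.mulVec w) ⬝ᵥ M.mulVec (v + M⁻¹.mulVec w) := by
    have := hM.posSemidef.dotProduct_mulVec_nonneg (v + M⁻¹.mulVec w)
    simpa using this
  constructor
  · have := key 0
    linarith [hnn, key 0]
  · intro hv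
    have hzero : v + M⁻¹.mulVec w = 0 := by rw [hv]; abel
    have := key 0
    rw [hzero] at this
    simp only [zero_dotProduct] at this
    linarith

/-- Completing the square: with `P_K` the value matrix of a stabilizing `K` and
`E_K = (R+BᵀP_K B)K − BᵀP_K A`, the quantity
`A_{K,K'}(x) = 2xᵀ(K'−K)ᵀE_K x + xᵀ(K'−K)ᵀ(R+BᵀP_K B)(K'−K)x` satisfies
`A_{K,K'}(x) ≥ −xᵀE_Kᵀ(R+BᵀP_K B)⁻¹E_K x`, with equality when
`K' = K − (R+BᵀP_K B)⁻¹E_K`. -/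
theorem stmt_10 (d k : ℕ) (A : Matrix (Fin d) (Fin d) ℝ) (B : Matrix (Fin d) (Fin k) ℝ)
    (Q : Matrix (Fin d) (Fin d) ℝ) (R : Matrix (Fin k) (Fin k) ℝ)
    (hQ : Q.PosDef) (hR : R.PosDef)
    (K : Matrix (Fin k) (Fin d) ℝ)
    (hK : ∀ μ ∈ spectrum ℂ ((A - B * K).map Complex.ofReal), ‖μ‖ < 1)
    (P : Matrix (Fin d) (Fin d) ℝ) (hP : P.PosDef)
    (hPeq : P = Q + Kᵀ * R * K + (A - B * K)ᵀ * P * (A - B * K))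
    (E : Matrix (Fin k) (Fin d) ℝ) (hE : E = (R + Bᵀ * P * B) * K - Bᵀ * P * A)
    (x : Fin d → ℝ) :
    (∀ K' : Matrix (Fin k) (Fin d) ℝ,
      2 * (x ⬝ᵥ ((K' - K)ᵀ * E).mulVec x) +
          x ⬝ᵥ ((K' - K)ᵀ * (R + Bᵀ * P * B) * (K' - K)).mulVec x
        ≥ -(x ⬝ᵥ (Eᵀ * (R + Bᵀ * P * B)⁻¹ * E).mulVec x)) ∧
    (2 * (x ⬝ᵥ (((K - (R + Bᵀ * P * B)⁻¹ * E) - K)ᵀ * E).mulVec x) +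
        x ⬝ᵥ (((K - (R + Bᵀ * P * B)⁻¹ * E) - K)ᵀ * (R + Bᵀ * P * B) *
          ((K - (R + Bᵀ * P * B)⁻¹ * E) - K)).mulVec x
      = -(x ⬝ᵥ (Eᵀ * (R + Bᵀ * P * B)⁻¹ * E).mulVec x)) := by
  set M := R + Bᵀ * P * B with hMdef
  have hM : M.PosDef := by
    have hB : (Bᵀ * P * B).PosSemidef := by
      have := hP.posSemidef.conjTranspose_mul_mul_same B
      simpa using this
    exact hR.add_posSemidef hB
  -- translation of the quadratic forms
  have trans1 : ∀ (C : Matrix (Fin k) (Fin d) ℝ) (N : Matrix (Fin k) (Fin k) ℝ)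
      (D : Matrix (Fin k) (Fin d) ℝ),
      x ⬝ᵥ (Cᵀ * N * D).mulVec x = (C.mulVec x) ⬝ᵥ N.mulVec (D.mulVec x) := by
    intro C N D
    rw [Matrix.mul_assoc, ← Matrix.mulVec_mulVec, Matrix.dotProduct_mulVec,
      ← Matrix.mulVec_transpose, Matrix.transpose_transpose, Matrix.mulVec_mulVec]
  have trans2 : ∀ (C D : Matrix (Fin k) (Fin d) ℝ),
      x ⬝ᵥ (Cᵀ * D).mulVec x = (C.mulVec x) ⬝ᵥ (D.mulVec x) := by
    intro C D
    rw [← Matrix.mulVec_mulVec, Matrix.dotProduct_mulVec, ← Matrix.mulVec_transpose,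
      Matrix.transpose_transpose]
  constructor
  · intro K'
    have h := (aux_complete_square M hM ((K' - K).mulVec x) (E.mulVec x)).1
    rw [trans2, trans1, trans1]
    exact h
  · have hv : ((K - M⁻¹ * E) - K).mulVec x = -(M⁻¹.mulVec (E.mulVec x)) := by
      have : (K - M⁻¹ * E) - K = -(M⁻¹ * E) := by abel
      rw [this, Matrix.neg_mulVec, Matrix.mulVec_mulVec]
    have h := (aux_complete_square M hM (((K - M⁻¹ * E) - K).mulVec x) (E.mulVec x)).2
      (by rw [hv])
    rw [trans2, trans1, trans1]
    exact h
end

section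
/- Let D_K ∈ R^{d×d} be symmetric positive definite with σ_min(D_K) ≥ μ > 0, let K ∈ R^{k×d} with ‖K‖ ≤ K̄, and σ > 0. Then the joint covariance D̃ = [[D_K, −D_K Kᵀ], [−K D_K, K D_K Kᵀ + σ² I_k]] satisfies σ_min(D̃) ≥ min{ μ/2, σ²/(8K̄²), σ²/2 }. -/
open Matrix

/-- Lower bound on the minimum singular value of the joint state–action covariance
`D̃ = [[D_K, −D_K Kᵀ], [−K D_K, K D_K Kᵀ + σ²I]]`: if `σ_min(D_K) ≥ μ > 0`
(expressed via the Rayleigh quotient) and `‖K‖ ≤ K̄` (i.e. `‖Kv‖² ≤ K̄²‖v‖²`), then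
`σ_min(D̃) ≥ min{μ/2, σ²/(8K̄²), σ²/2}` (again via the Rayleigh quotient). -/
theorem stmt_17 (d k : ℕ) (DK : Matrix (Fin d) (Fin d) ℝ) (hDK : DK.PosDef)
    (K : Matrix (Fin k) (Fin d) ℝ) (Kbar μ σ : ℝ) (hKbar : 0 < Kbar) (hμ : 0 < μ)
    (hσ : 0 < σ)
    (hDKmin : ∀ v : Fin d → ℝ, μ * (v ⬝ᵥ v) ≤ v ⬝ᵥ DK.mulVec v)
    (hKnorm : ∀ v : Fin d → ℝ, (K.mulVec v) ⬝ᵥ (K.mulVec v) ≤ Kbar ^ 2 * (v ⬝ᵥ v)) :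
    ∀ w : (Fin d ⊕ Fin k) → ℝ,
      min (μ / 2) (min (σ ^ 2 / (8 * Kbar ^ 2)) (σ ^ 2 / 2)) * (w ⬝ᵥ w)
        ≤ w ⬝ᵥ (fromBlocks DK (-(DK * Kᵀ)) (-(K * DK))
            (K * DK * Kᵀ + σ ^ 2 • (1 : Matrix (Fin k) (Fin k) ℝ))).mulVec w := by
  intro w
  set a : Fin d → ℝ := w ∘ Sum.inl with ha
  set b : Fin k → ℝ := w ∘ Sum.inr with hb
  set u : Fin d → ℝ := Kᵀ.mulVec b with hu
  set v : Fin d → ℝ := a - u with hv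
  have hself : ∀ {n : ℕ} (x : Fin n → ℝ), (0:ℝ) ≤ x ⬝ᵥ x := fun x =>
    Finset.sum_nonneg fun i _ => mul_self_nonneg _
  have hcross : ∀ x : Fin d → ℝ, u ⬝ᵥ DK.mulVec x = b ⬝ᵥ (K*DK).mulVec x := by
    intro x
    rw [hu, mulVec_transpose, dotProduct_mulVec, dotProduct_mulVec, vecMul_vecMul]
  -- the key identity
  have hid : w ⬝ᵥ (fromBlocks DK (-(DK * Kᵀ)) (-(K * DK))
      (K * DK * Kᵀ + σ ^ 2 • (1 : Matrix (Fin k) (Fin k) ℝ))).mulVec w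
      = v ⬝ᵥ DK.mulVec v + σ ^ 2 * (b ⬝ᵥ b) := by
    conv_lhs => rw [← Sum.elim_comp_inl_inr w]
    rw [fromBlocks_mulVec, sumElim_dotProduct_sumElim]
    have h1 : u ⬝ᵥ DK.mulVec a = b ⬝ᵥ (K*DK).mulVec a := hcross a
    have h2 : u ⬝ᵥ DK.mulVec u = b ⬝ᵥ (K*DK*Kᵀ).mulVec b := by
      rw [hcross u, hu, mulVec_mulVec, Matrix.mul_assoc]
    have h3 : a ⬝ᵥ DK.mulVec u = a ⬝ᵥ (DK*Kᵀ).mulVec b := by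
      rw [hu, mulVec_mulVec]
    simp only [hv, sub_dotProduct, dotProduct_sub, mulVec_sub, add_mulVec, neg_mulVec,
      dotProduct_add, dotProduct_neg, smul_mulVec, one_mulVec, dotProduct_smul,
      smul_eq_mul, Sum.elim_comp_inl, Sum.elim_comp_inr]
    rw [h1, h2, h3]
    ring
  have hww : w ⬝ᵥ w = a ⬝ᵥ a + b ⬝ᵥ b := by
    conv_lhs => rw [← Sum.elim_comp_inl_inr w]
    rw [sumElim_dotProduct_sumElim]
  -- ‖u‖² ≤ K̄²‖b‖²
  have huKb : u ⬝ᵥ u ≤ Kbar ^ 2 * (b ⬝ᵥ b) := by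
    have huu : u ⬝ᵥ u = b ⬝ᵥ K.mulVec u := by
      rw [hu, mulVec_transpose, ← dotProduct_mulVec, dotProduct_comm]
    have hCS : (b ⬝ᵥ K.mulVec u) ^ 2 ≤ (b ⬝ᵥ b) * ((K.mulVec u) ⬝ᵥ (K.mulVec u)) := by
      simpa [dotProduct, sq, mul_pow] using
        Finset.sum_mul_sq_le_sq_mul_sq Finset.univ b (K.mulVec u)
    have hK := hKnorm u
    have h0 : (0:ℝ) ≤ u ⬝ᵥ u := hself u
    rcases eq_or_lt_of_le h0 with h | h
    · nlinarith [hself b]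
    · have : (u ⬝ᵥ u) ^ 2 ≤ Kbar ^ 2 * (b ⬝ᵥ b) * (u ⬝ᵥ u) := by
        calc (u ⬝ᵥ u) ^ 2 = (b ⬝ᵥ K.mulVec u) ^ 2 := by rw [huu]
        _ ≤ (b ⬝ᵥ b) * ((K.mulVec u) ⬝ᵥ (K.mulVec u)) := hCS
        _ ≤ (b ⬝ᵥ b) * (Kbar ^ 2 * (u ⬝ᵥ u)) := by
            exact mul_le_mul_of_nonneg_left hK (hself b)
        _ = Kbar ^ 2 * (b ⬝ᵥ b) * (u ⬝ᵥ u) := by ring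
      nlinarith
  -- ‖a‖² ≤ 2‖v‖² + 2‖u‖²
  have hav : a ⬝ᵥ a ≤ 2 * (v ⬝ᵥ v) + 2 * (u ⬝ᵥ u) := by
    have hexp : a ⬝ᵥ a = v ⬝ᵥ v + 2 * (v ⬝ᵥ u) + u ⬝ᵥ u := by
      have : a = v + u := by simp [hv]
      rw [this]
      simp only [add_dotProduct, dotProduct_add]
      rw [dotProduct_comm u v]
      ring
    have hvm : (0:ℝ) ≤ (v - u) ⬝ᵥ (v - u) := hself _
    have hvm' : (v - u) ⬝ᵥ (v - u) = v ⬝ᵥ v - 2 * (v ⬝ᵥ u) + u ⬝ᵥ u := by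
      simp only [sub_dotProduct, dotProduct_sub]
      rw [dotProduct_comm u v]
      ring
    linarith [hvm' ▸ hvm]
  set t : ℝ := min μ (σ ^ 2 / (4 * Kbar ^ 2)) with ht
  have ht0 : 0 < t := lt_min hμ (by positivity)
  have htμ : t ≤ μ := min_le_left _ _
  have htK : t * Kbar ^ 2 ≤ σ ^ 2 / 4 := by
    have := min_le_right μ (σ ^ 2 / (4 * Kbar ^ 2))
    calc t * Kbar ^ 2 ≤ σ ^ 2 / (4 * Kbar ^ 2) * Kbar ^ 2 := by
          exact mul_le_mul_of_nonneg_right this (by positivity)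
    _ = σ ^ 2 / 4 := by field_simp
  have hQ : t * (v ⬝ᵥ v) + σ ^ 2 * (b ⬝ᵥ b)
      ≤ v ⬝ᵥ DK.mulVec v + σ ^ 2 * (b ⬝ᵥ b) := by
    have := hDKmin v
    nlinarith [hself v]
  set c : ℝ := min (μ / 2) (min (σ ^ 2 / (8 * Kbar ^ 2)) (σ ^ 2 / 2)) with hc
  have hct : c ≤ t / 2 := by
    rcases min_cases μ (σ ^ 2 / (4 * Kbar ^ 2)) with ⟨h, _⟩ | ⟨h, _⟩
    · calc c ≤ μ / 2 := min_le_left _ _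
      _ = t / 2 := by rw [ht, h]
    · have : c ≤ σ ^ 2 / (8 * Kbar ^ 2) := le_trans (min_le_right _ _) (min_le_left _ _)
      calc c ≤ σ ^ 2 / (8 * Kbar ^ 2) := this
      _ = σ ^ 2 / (4 * Kbar ^ 2) / 2 := by ring
      _ = t / 2 := by rw [ht, h]
  have hcσ : c ≤ σ ^ 2 / 2 := le_trans (min_le_right _ _) (min_le_right _ _)
  rw [hid, hww]
  have key : c * (a ⬝ᵥ a + b ⬝ᵥ b) ≤ t * (v ⬝ᵥ v) + σ ^ 2 * (b ⬝ᵥ b) := by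
    have hbb := hself b
    have haa := hself a
    have hvv := hself v
    have huu := hself u
    nlinarith [mul_le_mul_of_nonneg_left huKb (le_of_lt ht0),
      mul_le_mul_of_nonneg_left hav (le_of_lt ht0),
      mul_le_mul_of_nonneg_right htK hbb]
  linarith
end
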